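/- Let Φ be a Young function, φ ∈ 𝒢^dec (almost decreasing with φ(r)r^n almost increasing), and K : ℝⁿ×ℝⁿ∖{x=y} → ℂ satisfy |K(x,y)| ≤ C|x−y|^{−n}. Then there exists C' > 0 such that for all f ∈ L^{(Φ,φ)}(ℝⁿ), all balls B = B(z,r), and all x ∈ B: ∫_{ℝⁿ∖2B} |K(x,y) f(y)| dy ≤ C' (∫_{2r}^∞ Φ⁻¹(φ(t))/t dt) ‖f‖_{L^{(Φ,φ)}}. -/

import Mathlib

open MeasureTheory Set Metric Filter NNReal ENNReal Topology

noncomputable section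

/-- Generalized inverse in the sense of O'Neil. -/
def ginv (Φ : ℝ≥0∞ → ℝ≥0∞) (u : ℝ≥0∞) : ℝ≥0∞ :=
  if u = ⊤ then ⊤ else sInf {t | u < Φ t}

/-- A Young function: increasing, convex, vanishing at 0, left continuous,
not identically zero nor identically infinite. -/
structure IsYoung (Φ : ℝ≥0∞ → ℝ≥0∞) : Prop where
  mono : Monotone Φ
  zero : Φ 0 = 0
  top : Φ ⊤ = ⊤
  conv : ∀ (x y : ℝ≥0∞) (a b : ℝ≥0), a + b = 1 →
    Φ ((a : ℝ≥0∞) * x + (b : ℝ≥0∞) * y) ≤ (a : ℝ≥0∞) * Φ x + (b : ℝ≥0∞) * Φ y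
  lcont : ∀ t : ℝ≥0∞, t < sInf {s | Φ s = ⊤} →
    Filter.Tendsto Φ (nhdsWithin t (Set.Iio t)) (nhds (Φ t))
  pos : ∃ t, 0 < t ∧ Φ t ≠ ⊤
  fin : ∃ t, t ≠ ⊤ ∧ Φ t ≠ 0

/-- `θ` is almost decreasing on `(0,∞)`. -/
def AlmostDecreasingOn (θ : ℝ → ℝ) : Prop :=
  ∃ C : ℝ, 0 < C ∧ ∀ r s : ℝ, 0 < r → r < s → θ s ≤ C * θ r

/-- `θ` is almost increasing on `(0,∞)`. -/
def AlmostIncreasingOn (θ : ℝ → ℝ) : Prop :=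
  ∃ C : ℝ, 0 < C ∧ ∀ r s : ℝ, 0 < r → r < s → θ r ≤ C * θ s

/-- The class `𝒢^dec`: positive, almost decreasing `φ` with `r ↦ φ(r) rⁿ` almost increasing. -/
def Gdec (n : ℕ) (φ : ℝ → ℝ) : Prop :=
  (∀ r : ℝ, 0 < r → 0 < φ r) ∧ AlmostDecreasingOn φ ∧
    AlmostIncreasingOn (fun r => φ r * r ^ n)

variable {n : ℕ}

/-- The Orlicz–Morrey "norm" of `f` on the ball `B(a,r)`. -/
def ballNorm (Φ : ℝ≥0∞ → ℝ≥0∞) (φ : ℝ → ℝ)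
    (f : EuclideanSpace ℝ (Fin n) → ℝ) (a : EuclideanSpace ℝ (Fin n)) (r : ℝ) : ℝ≥0∞ :=
  sInf {lam : ℝ≥0∞ | 0 < lam ∧
    (ENNReal.ofReal (φ r))⁻¹ * ((volume (ball a r))⁻¹ *
      ∫⁻ x in ball a r, Φ (ENNReal.ofReal |f x| / lam)) ≤ 1}

/-- The Orlicz–Morrey norm `‖f‖_{L^{(Φ,φ)}}`: supremum over all balls of `ballNorm`. -/
def omNorm (Φ : ℝ≥0∞ → ℝ≥0∞) (φ : ℝ → ℝ) (f : EuclideanSpace ℝ (Fin n) → ℝ) : ℝ≥0∞ :=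
  ⨆ (a : EuclideanSpace ℝ (Fin n)) (r : ℝ) (_ : 0 < r), ballNorm Φ φ f a r

/-- The Orlicz–Campanato norm `‖f‖_{𝓛^{(Φ,φ)}} = sup_B ‖f − f_B‖_{Φ,φ,B}`. -/
def campNorm (Φ : ℝ≥0∞ → ℝ≥0∞) (φ : ℝ → ℝ) (f : EuclideanSpace ℝ (Fin n) → ℝ) : ℝ≥0∞ :=
  ⨆ (a : EuclideanSpace ℝ (Fin n)) (r : ℝ) (_ : 0 < r),
    ballNorm Φ φ (fun x => f x - ⨍ y in ball a r, f y) a r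

variable {Φ : ℝ≥0∞ → ℝ≥0∞}

/-- Superlinearity of a Young function: `s * Φ t ≤ t * Φ s` for `0 < t ≤ s`. -/
lemma IsYoung.superlin (hY : IsYoung Φ) {t s : ℝ≥0∞} (ht : t ≠ 0) (hts : t ≤ s) :
    s * Φ t ≤ t * Φ s := by
  rcases eq_or_ne s ⊤ with hs | hs
  · rw [hs, hY.top, ENNReal.mul_top ht]
    exact le_top
  have hs0 : s ≠ 0 := fun h => ht (le_antisymm (h ▸ hts) (zero_le))
  have htt : t ≠ ⊤ := fun h => hs (le_antisymm le_top (h ▸ hts))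
  set a : ℝ≥0 := t.toNNReal / s.toNNReal with ha
  have ha1 : a ≤ 1 := by
    rw [ha, div_le_one]
    · exact ENNReal.toNNReal_mono hs hts
    · exact ENNReal.toNNReal_pos hs0 hs
  have hab : a + (1 - a) = 1 := by rw [add_tsub_cancel_of_le ha1]
  have hcoe : (a : ℝ≥0∞) = t / s := by
    rw [ha, ENNReal.coe_div (ENNReal.toNNReal_ne_zero.2 ⟨hs0, hs⟩)]
    rw [ENNReal.coe_toNNReal htt, ENNReal.coe_toNNReal hs]
  have hΦt : Φ t ≤ (a : ℝ≥0∞) * Φ s := by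
    have := hY.conv s 0 a (1 - a) hab
    rw [mul_zero, add_zero, hY.zero, mul_zero, add_zero, hcoe,
      ENNReal.div_mul_cancel hs0 hs] at this
    rwa [hcoe]
  calc s * Φ t ≤ s * ((t / s) * Φ s) := by
        rw [← hcoe]; exact mul_le_mul_right hΦt s
    _ = (s * (t / s)) * Φ s := by ring
    _ = t * Φ s := by rw [ENNReal.mul_div_cancel hs0 hs]

lemma IsYoung.ginv_pos (hY : IsYoung Φ) {u : ℝ≥0∞} (hu : u ≠ 0) : 0 < ginv Φ u := by
  rcases eq_or_ne u ⊤ with hut | hut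
  · simp [ginv, hut]
  rw [ginv, if_neg hut]
  by_contra h
  push_neg at h
  have h0 : sInf {t | u < Φ t} = 0 := le_antisymm h (zero_le)
  have hall : ∀ t : ℝ≥0∞, 0 < t → u < Φ t := by
    intro t htp
    have : sInf {t | u < Φ t} < t := h0 ▸ htp
    obtain ⟨s, hs, hst⟩ := sInf_lt_iff.1 this
    exact lt_of_lt_of_le hs (hY.mono hst.le)
  obtain ⟨t0, ht0, ht0fin⟩ := hY.pos
  have hΦt0 : Φ t0 ≠ 0 := by
    intro h
    have := hall t0 ht0
    rw [h] at this
    simp at this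
  obtain ⟨a, hapos, ha⟩ := ENNReal.exists_nnreal_pos_mul_lt ht0fin hu
  set b : ℝ≥0 := min a 1 with hb
  have hbpos : 0 < b := lt_min hapos zero_lt_one
  have hb1 : b ≤ 1 := min_le_right _ _
  have hbu : (b : ℝ≥0∞) * Φ t0 < u :=
    lt_of_le_of_lt (mul_le_mul_left (by exact_mod_cast min_le_left a 1) _) ha
  have hconv := hY.conv t0 0 b (1 - b) (by rw [add_tsub_cancel_of_le hb1])
  rw [mul_zero, add_zero, hY.zero, mul_zero, add_zero] at hconv
  have hbt0 : (0 : ℝ≥0∞) < (b : ℝ≥0∞) * t0 := by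
    apply ENNReal.mul_pos (by exact_mod_cast hbpos.ne') ht0.ne'
  exact absurd (lt_of_lt_of_le (hall _ hbt0) (hconv.trans hbu.le)) (lt_irrefl u)

lemma IsYoung.ginv_lt_top (hY : IsYoung Φ) {u : ℝ≥0∞} (hu : u ≠ ⊤) : ginv Φ u < ⊤ := by
  rw [ginv, if_neg hu]
  obtain ⟨t1, ht1fin, ht1⟩ := hY.fin
  have ht10 : t1 ≠ 0 := fun h => ht1 (h ▸ hY.zero)
  rcases eq_or_ne (Φ t1) ⊤ with hc | hc
  · refine lt_of_le_of_lt (sInf_le ?_) ht1fin.lt_top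
    simp only [mem_setOf_eq, hc]
    exact hu.lt_top
  set c := Φ t1 with hcdef
  set s := t1 * ((u + 1) / c + 1) with hs
  have hst : s ≠ ⊤ := by
    rw [hs]
    apply ENNReal.mul_ne_top ht1fin
    apply ENNReal.add_ne_top.2 ⟨?_, one_ne_top⟩
    exact (ENNReal.div_lt_top (by simp [ENNReal.add_ne_top, hu]) ht1).ne
  have ht1s : t1 ≤ s := by
    rw [hs]
    nth_rewrite 1 [← mul_one t1]
    exact mul_le_mul_right (le_add_self) t1
  have hΦs : u < Φ s := by
    have hsl := hY.superlin ht10 ht1s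
    have h1 : s * c = t1 * ((u + 1) + c) := by
      rw [hs, mul_assoc]
      congr 1
      rw [add_mul, one_mul, ENNReal.div_mul_cancel ht1 hc]
    have h2 : t1 * (u + 1) ≤ t1 * Φ s := by
      calc t1 * (u + 1) ≤ t1 * ((u + 1) + c) := mul_le_mul_right le_self_add t1
        _ = s * c := h1.symm
        _ ≤ t1 * Φ s := hsl
    have h3 : u + 1 ≤ Φ s := by
      rwa [ENNReal.mul_le_mul_iff_right ht10 ht1fin] at h2
    exact lt_of_lt_of_le (ENNReal.lt_add_right hu one_ne_zero) h3
  exact lt_of_le_of_lt (sInf_le hΦs) hst.lt_top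

lemma IsYoung.key_pointwise (hY : IsYoung Φ) {u : ℝ≥0∞} (hu0 : u ≠ 0) (hut : u ≠ ⊤)
    (s : ℝ≥0∞) : s ≤ ginv Φ u * (1 + Φ s / u) := by
  set g := ginv Φ u with hg
  have hg0 : 0 < g := hY.ginv_pos hu0
  rcases le_or_gt s g with hs | hs
  · calc s ≤ g := hs
      _ = g * 1 := (mul_one g).symm
      _ ≤ g * (1 + Φ s / u) := mul_le_mul_right le_self_add g
  have hginv : g = sInf {t | u < Φ t} := by rw [hg, ginv, if_neg hut]
  have hΦs : u < Φ s := by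
    obtain ⟨t, htmem, hts⟩ := sInf_lt_iff.1 (hginv ▸ hs)
    exact lt_of_lt_of_le htmem (hY.mono hts.le)
  rcases eq_or_ne (Φ s) ⊤ with htop | htop
  · have : Φ s / u = ⊤ := by rw [htop]; exact ENNReal.top_div_of_ne_top hut
    rw [this, add_top, ENNReal.mul_top hg0.ne']
    exact le_top
  have hΦs0 : Φ s ≠ 0 := (lt_of_le_of_lt zero_le hΦs).ne'
  have hlb : s * u / Φ s ≤ g := by
    rw [hginv]
    apply le_sInf
    intro t htmem
    rcases le_or_gt s t with hst | hst
    · calc s * u / Φ s ≤ s * Φ s / Φ s := by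
            apply ENNReal.div_le_div_right (mul_le_mul_right hΦs.le s)
        _ = s := by rw [mul_comm, mul_comm (Φ s) s, mul_div_assoc,
            ENNReal.div_self hΦs0 htop, mul_one]
        _ ≤ t := hst
    · have ht0 : t ≠ 0 := by
        intro h
        have h3 : u < Φ t := htmem
        rw [h, hY.zero] at h3
        simp at h3
      have := hY.superlin ht0 hst.le
      have h1 : s * u ≤ t * Φ s := le_trans (mul_le_mul_right (le_of_lt htmem) s) this
      exact (ENNReal.div_le_iff_le_mul (Or.inl hΦs0) (Or.inl htop)).2
        (by rw [mul_comm t (Φ s)] at h1 ⊢; exact h1)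
  have h2 : s * u ≤ g * Φ s :=
    (ENNReal.div_le_iff_le_mul (Or.inl hΦs0) (Or.inl htop)).1 hlb
  have h3 : s ≤ g * Φ s / u := by
    rw [ENNReal.le_div_iff_mul_le (Or.inl hu0) (Or.inl hut)]
    exact h2
  calc s ≤ g * Φ s / u := h3
    _ = g * (Φ s / u) := by rw [mul_div_assoc]
    _ ≤ g * (1 + Φ s / u) := mul_le_mul_right le_add_self g

lemma mean_est (hY : IsYoung Φ) (φ : ℝ → ℝ) (hφpos : ∀ r : ℝ, 0 < r → 0 < φ r)
    (f : EuclideanSpace ℝ (Fin n) → ℝ) (z : EuclideanSpace ℝ (Fin n)) {t : ℝ} (ht : 0 < t) :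
    ∫⁻ y in ball z t, ENNReal.ofReal |f y| ≤
      2 * ginv Φ (ENNReal.ofReal (φ t)) * volume (ball z t) * omNorm Φ φ f := by
  set u := ENNReal.ofReal (φ t) with hu
  have hu0 : u ≠ 0 := (ENNReal.ofReal_pos.2 (hφpos t ht)).ne'
  have hut : u ≠ ⊤ := ENNReal.ofReal_ne_top
  set g := ginv Φ u with hg
  have hg0 : g ≠ 0 := (hY.ginv_pos hu0).ne'
  have hgt : g ≠ ⊤ := (hY.ginv_lt_top hut).ne
  set vB := volume (ball z t) with hvB
  have hvB0 : vB ≠ 0 := (measure_ball_pos volume z ht).ne'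
  have hvBt : vB ≠ ⊤ := measure_ball_lt_top.ne
  set c := 2 * g * vB with hc
  have hc0 : c ≠ 0 := by
    simp only [hc, mul_ne_zero_iff]
    exact ⟨⟨two_ne_zero, hg0⟩, hvB0⟩
  have hct : c ≠ ⊤ := by
    apply ENNReal.mul_ne_top (ENNReal.mul_ne_top ENNReal.ofNat_ne_top hgt) hvBt
  have key : ∀ lam : ℝ≥0∞, 0 < lam →
      u⁻¹ * (vB⁻¹ * ∫⁻ x in ball z t, Φ (ENNReal.ofReal |f x| / lam)) ≤ 1 →
      ∫⁻ y in ball z t, ENNReal.ofReal |f y| ≤ c * lam := by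
    intro lam hlam0 hcond
    rcases eq_or_ne lam ⊤ with hlt | hlt
    · rw [hlt, ENNReal.mul_top hc0]
      exact le_top
    set I := ∫⁻ x in ball z t, Φ (ENNReal.ofReal |f x| / lam) with hI
    have hIle : I ≤ u * vB := by
      have h1 : vB⁻¹ * I ≤ u := by
        calc vB⁻¹ * I = u * (u⁻¹ * (vB⁻¹ * I)) := by
              rw [← mul_assoc, ENNReal.mul_inv_cancel hu0 hut, one_mul]
          _ ≤ u * 1 := mul_le_mul_right hcond u
          _ = u := mul_one u
      calc I = vB * (vB⁻¹ * I) := by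
            rw [← mul_assoc, ENNReal.mul_inv_cancel hvB0 hvBt, one_mul]
        _ ≤ vB * u := mul_le_mul_right h1 vB
        _ = u * vB := mul_comm _ _
    have hpt : ∀ y, ENNReal.ofReal |f y| ≤
        lam * g * (1 + Φ (ENNReal.ofReal |f y| / lam) / u) := by
      intro y
      have h2 := hY.key_pointwise hu0 hut (ENNReal.ofReal |f y| / lam)
      calc ENNReal.ofReal |f y| = lam * (ENNReal.ofReal |f y| / lam) :=
            (ENNReal.mul_div_cancel hlam0.ne' hlt).symm
        _ ≤ lam * (g * (1 + Φ (ENNReal.ofReal |f y| / lam) / u)) := mul_le_mul_right h2 lam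
        _ = lam * g * (1 + Φ (ENNReal.ofReal |f y| / lam) / u) := by rw [mul_assoc]
    calc ∫⁻ y in ball z t, ENNReal.ofReal |f y|
        ≤ ∫⁻ y in ball z t, lam * g * (1 + Φ (ENNReal.ofReal |f y| / lam) / u) :=
          lintegral_mono hpt
      _ = lam * g * ∫⁻ y in ball z t, (1 + Φ (ENNReal.ofReal |f y| / lam) / u) :=
          lintegral_const_mul' _ _ (ENNReal.mul_ne_top hlt hgt)
      _ = lam * g * (vB + u⁻¹ * I) := by
          congr 1
          rw [lintegral_add_left measurable_const]
          congr 1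
          · simp [hvB]
          · rw [hI]
            have : ∀ y : EuclideanSpace ℝ (Fin n),
                Φ (ENNReal.ofReal |f y| / lam) / u = u⁻¹ * Φ (ENNReal.ofReal |f y| / lam) := by
              intro y; rw [div_eq_mul_inv, mul_comm]
            simp_rw [this]
            exact lintegral_const_mul' _ _ (ENNReal.inv_ne_top.2 hu0)
      _ ≤ lam * g * (vB + u⁻¹ * (u * vB)) := by
          exact mul_le_mul_right (add_le_add_right (mul_le_mul_right hIle u⁻¹) vB) _
      _ = lam * g * (vB + vB) := by rw [← mul_assoc, ENNReal.inv_mul_cancel hu0 hut, one_mul]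
      _ = c * lam := by rw [hc]; ring
  have hmain : ∫⁻ y in ball z t, ENNReal.ofReal |f y| ≤ c * ballNorm Φ φ f z t := by
    rw [ballNorm]
    have hdiv : (∫⁻ y in ball z t, ENNReal.ofReal |f y|) / c ≤
        sInf {lam : ℝ≥0∞ | 0 < lam ∧
          (ENNReal.ofReal (φ t))⁻¹ * ((volume (ball z t))⁻¹ *
            ∫⁻ x in ball z t, Φ (ENNReal.ofReal |f x| / lam)) ≤ 1} := by
      apply le_sInf
      rintro lam ⟨hlam0, hcond⟩
      rw [ENNReal.div_le_iff_le_mul (Or.inl hc0) (Or.inl hct)]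
      rw [mul_comm]
      exact key lam hlam0 hcond
    calc ∫⁻ y in ball z t, ENNReal.ofReal |f y|
        = c * ((∫⁻ y in ball z t, ENNReal.ofReal |f y|) / c) :=
          (ENNReal.mul_div_cancel hc0 hct).symm
      _ ≤ _ := mul_le_mul_right hdiv c
  have hb : ballNorm Φ φ f z t ≤ omNorm Φ φ f := by
    apply le_iSup_of_le z
    apply le_iSup_of_le t
    exact le_iSup (fun _ : 0 < t => ballNorm Φ φ f z t) ht
  calc ∫⁻ y in ball z t, ENNReal.ofReal |f y| ≤ c * ballNorm Φ φ f z t := hmain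
    _ ≤ c * omNorm Φ φ f := mul_le_mul_right hb c
    _ = 2 * g * vB * omNorm Φ φ f := by rw [hc]

/-- Monotonicity of the generalized inverse. -/
lemma ginv_mono (Φ : ℝ≥0∞ → ℝ≥0∞) : Monotone (ginv Φ) := by
  intro u v huv
  rcases eq_or_ne v ⊤ with hv | hv
  · simp [ginv, hv]
  have hu : u ≠ ⊤ := fun h => hv (le_antisymm le_top (h ▸ huv))
  rw [ginv, if_neg hu, ginv, if_neg hv]
  apply sInf_le_sInf
  intro t ht
  exact lt_of_le_of_lt huv ht

/-- Positivity of the tail integral. -/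
lemma tail_pos (hY : IsYoung Φ) {φ : ℝ → ℝ} (hφ : Gdec n φ) {r : ℝ} (hr : 0 < r) :
    0 < ∫⁻ t in Set.Ioi (2 * r), ginv Φ (ENNReal.ofReal (φ t)) / ENNReal.ofReal t := by
  obtain ⟨Cd, hCd0, hCd⟩ := hφ.2.1
  set δ : ℝ := φ (3 * r) / Cd with hδ
  have hδpos : 0 < δ := div_pos (hφ.1 _ (by linarith)) hCd0
  set γ : ℝ≥0∞ := ginv Φ (ENNReal.ofReal δ) with hγ
  have hγ0 : γ ≠ 0 := (hY.ginv_pos (ENNReal.ofReal_pos.2 hδpos).ne').ne'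
  set cst : ℝ≥0∞ := γ * (ENNReal.ofReal (3 * r))⁻¹ with hcst
  have hlb : ∀ t ∈ Ioo (2 * r) (3 * r),
      cst ≤ ginv Φ (ENNReal.ofReal (φ t)) / ENNReal.ofReal t := by
    intro t ht
    have htpos : 0 < t := lt_trans (by linarith) ht.1
    have hφt : δ ≤ φ t := by
      have h5 := hCd t (3 * r) htpos ht.2
      rw [hδ, div_le_iff₀ hCd0]
      linarith
    have h1 : γ ≤ ginv Φ (ENNReal.ofReal (φ t)) :=
      ginv_mono Φ (ENNReal.ofReal_le_ofReal hφt)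
    have h2 : ENNReal.ofReal t ≤ ENNReal.ofReal (3 * r) :=
      ENNReal.ofReal_le_ofReal ht.2.le
    rw [hcst, ← div_eq_mul_inv]
    exact ENNReal.div_le_div h1 h2
  have hmono : ∫⁻ t in Set.Ioi (2 * r), (Ioo (2 * r) (3 * r)).indicator (fun _ => cst) t ≤
      ∫⁻ t in Set.Ioi (2 * r), ginv Φ (ENNReal.ofReal (φ t)) / ENNReal.ofReal t := by
    apply lintegral_mono
    intro t
    by_cases ht : t ∈ Ioo (2 * r) (3 * r)
    · rw [indicator_of_mem ht]; exact hlb t ht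
    · rw [indicator_of_notMem ht]; exact zero_le
  have hval : ∫⁻ t in Set.Ioi (2 * r), (Ioo (2 * r) (3 * r)).indicator (fun _ => cst) t =
      cst * ENNReal.ofReal r := by
    rw [lintegral_indicator measurableSet_Ioo, Measure.restrict_restrict measurableSet_Ioo]
    rw [setLIntegral_const]
    congr 1
    have : Ioo (2 * r) (3 * r) ∩ Set.Ioi (2 * r) = Ioo (2 * r) (3 * r) := by
      apply inter_eq_left.2
      intro t ht
      exact ht.1
    rw [this, Real.volume_Ioo]
    congr 1
    ring
  refine lt_of_lt_of_le ?_ (le_trans (le_of_eq hval.symm) hmono)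
  apply ENNReal.mul_pos
  · rw [hcst]
    exact mul_ne_zero hγ0 (ENNReal.inv_ne_zero.2 ENNReal.ofReal_ne_top)
  · exact (ENNReal.ofReal_pos.2 hr).ne'

/-- tail estimate for a kernel of size `|K(x,y)| ≤ C|x−y|^{-n}`:
for `x ∈ B(z,r)`,
`∫_{ℝⁿ∖2B} |K(x,y) f(y)| dy ≤ C' (∫_{2r}^∞ Φ⁻¹(φ(t))/t dt) ‖f‖_{L^{(Φ,φ)}}`. -/
theorem stmt18 {n : ℕ} (Φ : ℝ≥0∞ → ℝ≥0∞) (hY : IsYoung Φ)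
    (φ : ℝ → ℝ) (hφ : Gdec n φ)
    (K : EuclideanSpace ℝ (Fin n) → EuclideanSpace ℝ (Fin n) → ℂ)
    (CK : ℝ) (hCK : 0 < CK)
    (hK : ∀ x y : EuclideanSpace ℝ (Fin n), x ≠ y → ‖K x y‖ ≤ CK / ‖x - y‖ ^ n) :
    ∃ C' : ℝ, 0 < C' ∧
      ∀ f : EuclideanSpace ℝ (Fin n) → ℝ,
      ∀ (z : EuclideanSpace ℝ (Fin n)) (r : ℝ), 0 < r →
      ∀ x ∈ ball z r,
        ∫⁻ y in (ball z (2 * r))ᶜ, ENNReal.ofReal (‖K x y‖ * |f y|) ≤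
          ENNReal.ofReal C' *
            (∫⁻ t in Set.Ioi (2 * r), ginv Φ (ENNReal.ofReal (φ t)) / ENNReal.ofReal t) *
            omNorm Φ φ f := by
  rcases Nat.eq_zero_or_pos n with hn | hn
  · subst hn
    refine ⟨1, one_pos, ?_⟩
    intro f z r hr x hx
    have hempty : (ball z (2 * r))ᶜ = (∅ : Set (EuclideanSpace ℝ (Fin 0))) := by
      ext y
      simp only [mem_compl_iff, mem_empty_iff_false, iff_false, not_not, mem_ball]
      rw [Subsingleton.elim y z, dist_self]
      linarith
    rw [hempty, Measure.restrict_empty, lintegral_zero_measure]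
    exact zero_le
  set c₁ := volume (ball (0 : EuclideanSpace ℝ (Fin n)) 1) with hc₁
  have hc₁0 : c₁ ≠ 0 := (measure_ball_pos volume _ one_pos).ne'
  have hc₁t : c₁ ≠ ⊤ := measure_ball_lt_top.ne
  have hnpos : (0 : ℝ) < n := Nat.cast_pos.2 hn
  refine ⟨CK * 2 ^ n * (2 * n * c₁.toReal), ?_, ?_⟩
  · apply mul_pos (mul_pos hCK (pow_pos two_pos n))
    apply mul_pos (mul_pos two_pos hnpos) (ENNReal.toReal_pos hc₁0 hc₁t)
  intro f z r hr x hx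
  have hd2pos : (0 : ℝ) < 2 * r := by linarith
  rcases eq_or_ne (omNorm Φ φ f) ⊤ with hom | hom
  · rw [hom]
    have hC'pos : (0:ℝ) < CK * 2 ^ n * (2 * n * c₁.toReal) := by
      apply mul_pos (mul_pos hCK (pow_pos two_pos n))
      apply mul_pos (mul_pos two_pos hnpos) (ENNReal.toReal_pos hc₁0 hc₁t)
    rw [ENNReal.mul_top (mul_ne_zero (ENNReal.ofReal_pos.2 hC'pos).ne'
      (tail_pos hY hφ hr).ne')]
    exact le_top
  set M := omNorm Φ φ f with hM
  -- the compl of the double ball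
  set Bc := (ball z (2 * r))ᶜ with hBcdef
  have hBcm : MeasurableSet Bc := measurableSet_ball.compl
  have hBcd : ∀ y ∈ Bc, 2 * r ≤ dist y z := by
    intro y hy
    by_contra h
    push_neg at h
    exact hy (mem_ball.2 h)
  -- the kernel bound function
  set bnd : EuclideanSpace ℝ (Fin n) → ℝ≥0∞ :=
    fun y => ENNReal.ofReal (CK * 2 ^ n / dist y z ^ n) with hbnddef
  have hbndmeas : Measurable bnd := by
    apply ENNReal.measurable_ofReal.comp
    exact measurable_const.div ((measurable_id.dist measurable_const).pow_const n)
  have hbnd0t : ∀ y ∈ Bc, bnd y ≠ 0 ∧ bnd y ≠ ⊤ := by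
    intro y hy
    have hdy := hBcd y hy
    have hdpos : 0 < dist y z := lt_of_lt_of_le hd2pos hdy
    constructor
    · exact (ENNReal.ofReal_pos.2 (by positivity)).ne'
    · exact ENNReal.ofReal_ne_top
  -- Step 1: bound the kernel
  have hker : ∀ y ∈ Bc, ENNReal.ofReal (‖K x y‖ * |f y|) ≤ bnd y * ENNReal.ofReal |f y| := by
    intro y hy
    have hdy := hBcd y hy
    have hdpos : 0 < dist y z := lt_of_lt_of_le hd2pos hdy
    have hxz : dist x z < r := mem_ball.1 hx
    have htri : dist y z ≤ dist y x + dist x z := dist_triangle y x z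
    have hxy : dist y z / 2 ≤ ‖x - y‖ := by
      have hnorm : ‖x - y‖ = dist y x := by rw [dist_comm y x, dist_eq_norm]
      rw [hnorm]
      linarith
    have hxyn : x ≠ y := by
      intro h
      rw [h, sub_self, norm_zero] at hxy
      linarith
    have hxypos : 0 < ‖x - y‖ := lt_of_lt_of_le (by linarith) hxy
    have hKb : ‖K x y‖ ≤ CK * 2 ^ n / dist y z ^ n := by
      have h0 := hK x y hxyn
      have hpow : (dist y z / 2) ^ n ≤ ‖x - y‖ ^ n :=
        pow_le_pow_left₀ (by positivity) hxy n
      calc ‖K x y‖ ≤ CK / ‖x - y‖ ^ n := h0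
        _ ≤ CK / (dist y z / 2) ^ n :=
            div_le_div_of_nonneg_left hCK.le (by positivity) hpow
        _ = CK * 2 ^ n / dist y z ^ n := by
            rw [div_pow, div_div_eq_mul_div]
    calc ENNReal.ofReal (‖K x y‖ * |f y|)
        ≤ ENNReal.ofReal ((CK * 2 ^ n / dist y z ^ n) * |f y|) :=
          ENNReal.ofReal_le_ofReal (mul_le_mul_of_nonneg_right hKb (abs_nonneg _))
      _ = bnd y * ENNReal.ofReal |f y| := by
          rw [ENNReal.ofReal_mul (by positivity)]
  have step1 : ∫⁻ y in Bc, ENNReal.ofReal (‖K x y‖ * |f y|) ≤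
      ∫⁻ y in Bc, bnd y * ENNReal.ofReal |f y| := by
    apply lintegral_mono_ae
    filter_upwards [ae_restrict_mem hBcm] with y hy using hker y hy
  -- Step 2: measurable minorant
  obtain ⟨h0, h0meas, h0le, h0eq⟩ := exists_measurable_le_lintegral_eq
    (volume.restrict Bc) (fun y => bnd y * ENNReal.ofReal |f y|)
  set h : EuclideanSpace ℝ (Fin n) → ℝ≥0∞ := Bc.indicator (fun y => h0 y / bnd y) with hhdef
  have hhmeas : Measurable h := (h0meas.div hbndmeas).indicator hBcm
  have hhle : ∀ y, h y ≤ ENNReal.ofReal |f y| := by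
    intro y
    rw [hhdef]
    by_cases hy : y ∈ Bc
    · rw [indicator_of_mem hy]
      obtain ⟨hb0, hbt⟩ := hbnd0t y hy
      calc h0 y / bnd y ≤ (bnd y * ENNReal.ofReal |f y|) / bnd y :=
            ENNReal.div_le_div_right (h0le y) _
        _ = ENNReal.ofReal |f y| := by
            rw [mul_comm, mul_div_assoc, ENNReal.div_self hb0 hbt, mul_one]
    · rw [indicator_of_notMem hy]
      exact zero_le
  have hh0 : ∀ y ∈ Bc, h0 y ≤ bnd y * h y := by
    intro y hy
    obtain ⟨hb0, hbt⟩ := hbnd0t y hy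
    rw [hhdef, indicator_of_mem hy, ENNReal.mul_div_cancel hb0 hbt]
  have step2 : ∫⁻ y in Bc, bnd y * ENNReal.ofReal |f y| ≤ ∫⁻ y in Bc, bnd y * h y := by
    rw [h0eq]
    apply lintegral_mono_ae
    filter_upwards [ae_restrict_mem hBcm] with y hy using hh0 y hy
  -- layer cake representation of the radial weight
  set a : ℝ := -(n : ℝ) - 1 with hadef
  have ha1 : a < -1 := by rw [hadef]; linarith
  set ker : ℝ → ℝ≥0∞ := fun t => ENNReal.ofReal (t ^ a) with hkerdef
  have hkermeas : Measurable ker := by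
    apply ENNReal.measurable_ofReal.comp
    fun_prop
  have hkert : ∀ t, ker t ≠ ⊤ := fun t => ENNReal.ofReal_ne_top
  have hlayer : ∀ d : ℝ, 0 < d →
      ENNReal.ofReal ((d ^ n)⁻¹) = ENNReal.ofReal n * ∫⁻ t in Set.Ioi d, ker t := by
    intro d hd
    have hint : ∫ t in Set.Ioi d, t ^ a = -d ^ (a + 1) / (a + 1) :=
      integral_Ioi_rpow_of_lt ha1 hd
    have h2 : ∫⁻ t in Set.Ioi d, ker t = ENNReal.ofReal (∫ t in Set.Ioi d, t ^ a) := by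
      rw [← ofReal_integral_eq_lintegral_ofReal (integrableOn_Ioi_rpow_of_lt ha1 hd) ?_]
      filter_upwards [ae_restrict_mem measurableSet_Ioi] with t ht
      exact Real.rpow_nonneg (le_of_lt (hd.trans ht)) a
    rw [h2, hint, ← ENNReal.ofReal_mul (by positivity : (0:ℝ) ≤ (n:ℝ))]
    congr 1
    have han : a + 1 = -(n : ℝ) := by rw [hadef]; ring
    rw [han, neg_div_neg_eq, mul_div_cancel₀ _ hnpos.ne']
    rw [Real.rpow_neg hd.le, Real.rpow_natCast]
  -- the product-set indicator
  set S : Set (EuclideanSpace ℝ (Fin n) × ℝ) := {p | dist p.1 z < p.2} with hSdef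
  have hSmeas : MeasurableSet S :=
    measurableSet_lt (measurable_fst.dist measurable_const) measurable_snd
  set G : EuclideanSpace ℝ (Fin n) → ℝ → ℝ≥0∞ :=
    fun y t => S.indicator (fun _ => (1 : ℝ≥0∞)) (y, t) * (ker t * h y) with hGdef
  have hGmeas : Measurable (Function.uncurry G) := by
    apply Measurable.mul
    · exact measurable_one.indicator hSmeas
    · exact (hkermeas.comp measurable_snd).mul (hhmeas.comp measurable_fst)
  -- rebase the t-integral onto Ioi (2r)
  have hty : ∀ y ∈ Bc, ∫⁻ t in Set.Ioi (dist y z), ker t =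
      ∫⁻ t in Set.Ioi (2 * r), S.indicator (fun _ => (1 : ℝ≥0∞)) (y, t) * ker t := by
    intro y hy
    have hdy := hBcd y hy
    have hpt : ∀ t : ℝ, S.indicator (fun _ => (1 : ℝ≥0∞)) (y, t) * ker t =
        (Set.Ioi (dist y z)).indicator ker t := by
      intro t
      by_cases hmem : dist y z < t
      · rw [indicator_of_mem (show (y, t) ∈ S from hmem),
          indicator_of_mem (mem_Ioi.2 hmem), one_mul]
      · rw [indicator_of_notMem (show (y, t) ∉ S from hmem),
          indicator_of_notMem (by simpa using hmem), zero_mul]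
    simp_rw [hpt]
    rw [lintegral_indicator measurableSet_Ioi, Measure.restrict_restrict measurableSet_Ioi]
    rw [Ioi_inter_Ioi, max_eq_left hdy]
  -- split the integrand
  have hsplit : ∀ y ∈ Bc, bnd y * h y =
      ENNReal.ofReal (CK * 2 ^ n) * ENNReal.ofReal n * ∫⁻ t in Set.Ioi (2 * r), G y t := by
    intro y hy
    have hdy := hBcd y hy
    have hdpos : 0 < dist y z := lt_of_lt_of_le hd2pos hdy
    have hbndeq : bnd y =
        ENNReal.ofReal (CK * 2 ^ n) * (ENNReal.ofReal n * ∫⁻ t in Set.Ioi (dist y z), ker t) := by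
      rw [hbnddef]
      simp only []
      rw [div_eq_mul_inv, ENNReal.ofReal_mul (by positivity : (0:ℝ) ≤ CK * 2 ^ n)]
      rw [hlayer (dist y z) hdpos]
    have hmeas2 : Measurable (fun t => S.indicator (fun _ => (1 : ℝ≥0∞)) (y, t) * ker t) := by
      apply Measurable.mul _ hkermeas
      exact (measurable_one.indicator hSmeas).comp (measurable_prodMk_left)
    have hswap2 : (∫⁻ t in Set.Ioi (dist y z), ker t) * h y =
        ∫⁻ t in Set.Ioi (2 * r), G y t := by
      rw [hty y hy, ← lintegral_mul_const (h y) hmeas2]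
      apply lintegral_congr
      intro t
      rw [hGdef]
      simp only []
      rw [mul_assoc]
    calc bnd y * h y
        = ENNReal.ofReal (CK * 2 ^ n) * ENNReal.ofReal n *
            ((∫⁻ t in Set.Ioi (dist y z), ker t) * h y) := by rw [hbndeq]; ring
      _ = ENNReal.ofReal (CK * 2 ^ n) * ENNReal.ofReal n *
            ∫⁻ t in Set.Ioi (2 * r), G y t := by rw [hswap2]
  have step3 : ∫⁻ y in Bc, bnd y * h y =
      ENNReal.ofReal (CK * 2 ^ n) * ENNReal.ofReal n *
        ∫⁻ y in Bc, ∫⁻ t in Set.Ioi (2 * r), G y t := by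
    rw [← lintegral_const_mul' _ _
      (ENNReal.mul_ne_top ENNReal.ofReal_ne_top ENNReal.ofReal_ne_top)]
    apply lintegral_congr_ae
    filter_upwards [ae_restrict_mem hBcm] with y hy using hsplit y hy
  -- swap
  have hswap : ∫⁻ y in Bc, ∫⁻ t in Set.Ioi (2 * r), G y t =
      ∫⁻ t in Set.Ioi (2 * r), ∫⁻ y in Bc, G y t :=
    lintegral_lintegral_swap hGmeas.aemeasurable
  -- inner estimate
  have hvol : ∀ t : ℝ, 0 < t → ker t * volume (ball z t) = ENNReal.ofReal t⁻¹ * c₁ := by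
    intro t htpos
    rw [Measure.addHaar_ball_of_pos volume z htpos, finrank_euclideanSpace_fin, ← hc₁,
      ← mul_assoc]
    congr 1
    rw [hkerdef]
    simp only []
    rw [← ENNReal.ofReal_mul (Real.rpow_nonneg htpos.le a)]
    congr 1
    rw [← Real.rpow_natCast t n, ← Real.rpow_add htpos]
    rw [show a + (n : ℝ) = -1 by rw [hadef]; ring, Real.rpow_neg_one]
  have hinner : ∀ t ∈ Set.Ioi (2 * r), ∫⁻ y in Bc, G y t ≤
      2 * c₁ * M * (ginv Φ (ENNReal.ofReal (φ t)) / ENNReal.ofReal t) := by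
    intro t htmem
    have htpos : 0 < t := lt_trans hd2pos htmem
    have hptw : ∀ y, G y t = (ball z t).indicator (fun y' => ker t * h y') y := by
      intro y
      by_cases hmem : dist y z < t
      · rw [hGdef]
        simp only []
        rw [indicator_of_mem (show (y, t) ∈ S from hmem),
          indicator_of_mem (mem_ball.2 hmem), one_mul]
      · rw [hGdef]
        simp only []
        rw [indicator_of_notMem (show (y, t) ∉ S from hmem),
          indicator_of_notMem (fun hc => hmem (mem_ball.1 hc)), zero_mul]
    calc ∫⁻ y in Bc, G y t
        = ∫⁻ y in Bc, (ball z t).indicator (fun y' => ker t * h y') y := by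
          apply lintegral_congr
          intro y
          exact hptw y
      _ = ∫⁻ y in ball z t ∩ Bc, ker t * h y := by
          rw [lintegral_indicator measurableSet_ball,
            Measure.restrict_restrict measurableSet_ball]
      _ ≤ ∫⁻ y in ball z t, ker t * h y := lintegral_mono_set inter_subset_left
      _ = ker t * ∫⁻ y in ball z t, h y := lintegral_const_mul' _ _ (hkert t)
      _ ≤ ker t * ∫⁻ y in ball z t, ENNReal.ofReal |f y| :=
          mul_le_mul_right (lintegral_mono hhle) _
      _ ≤ ker t * (2 * ginv Φ (ENNReal.ofReal (φ t)) * volume (ball z t) * M) :=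
          mul_le_mul_right (mean_est hY φ hφ.1 f z htpos) _
      _ = 2 * c₁ * M * (ginv Φ (ENNReal.ofReal (φ t)) / ENNReal.ofReal t) := by
          rw [div_eq_mul_inv, ← ENNReal.ofReal_inv_of_pos htpos]
          calc ker t * (2 * ginv Φ (ENNReal.ofReal (φ t)) * volume (ball z t) * M)
              = (ker t * volume (ball z t)) * (2 * ginv Φ (ENNReal.ofReal (φ t)) * M) := by
                ring
            _ = (ENNReal.ofReal t⁻¹ * c₁) * (2 * ginv Φ (ENNReal.ofReal (φ t)) * M) := by
                rw [hvol t htpos]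
            _ = 2 * c₁ * M * (ginv Φ (ENNReal.ofReal (φ t)) * ENNReal.ofReal t⁻¹) := by
                ring
  have step4 : ∫⁻ t in Set.Ioi (2 * r), ∫⁻ y in Bc, G y t ≤
      2 * c₁ * M * ∫⁻ t in Set.Ioi (2 * r),
        ginv Φ (ENNReal.ofReal (φ t)) / ENNReal.ofReal t := by
    rw [← lintegral_const_mul' _ _
      (ENNReal.mul_ne_top (ENNReal.mul_ne_top ENNReal.ofNat_ne_top hc₁t) hom)]
    apply lintegral_mono_ae
    filter_upwards [ae_restrict_mem measurableSet_Ioi] with t ht using hinner t ht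
  -- assemble
  set Itail := ∫⁻ t in Set.Ioi (2 * r),
    ginv Φ (ENNReal.ofReal (φ t)) / ENNReal.ofReal t with hItail
  calc ∫⁻ y in Bc, ENNReal.ofReal (‖K x y‖ * |f y|)
      ≤ ∫⁻ y in Bc, bnd y * ENNReal.ofReal |f y| := step1
    _ ≤ ∫⁻ y in Bc, bnd y * h y := step2
    _ = ENNReal.ofReal (CK * 2 ^ n) * ENNReal.ofReal n *
        ∫⁻ y in Bc, ∫⁻ t in Set.Ioi (2 * r), G y t := step3
    _ = ENNReal.ofReal (CK * 2 ^ n) * ENNReal.ofReal n *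
        ∫⁻ t in Set.Ioi (2 * r), ∫⁻ y in Bc, G y t := by rw [hswap]
    _ ≤ ENNReal.ofReal (CK * 2 ^ n) * ENNReal.ofReal n * (2 * c₁ * M * Itail) :=
        mul_le_mul_right step4 _
    _ = ENNReal.ofReal (CK * 2 ^ n * (2 * n * c₁.toReal)) * Itail * M := by
        rw [ENNReal.ofReal_mul (by positivity : (0:ℝ) ≤ CK * 2 ^ n)]
        rw [ENNReal.ofReal_mul (by positivity : (0:ℝ) ≤ 2 * (n:ℝ))]
        rw [ENNReal.ofReal_mul (by norm_num : (0:ℝ) ≤ 2)]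
        rw [ENNReal.ofReal_ofNat, ENNReal.ofReal_natCast, ENNReal.ofReal_toReal hc₁t]
        ring
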